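/- Fix a real a > 0 and integers m ≥ 0 and ℓ ≥ 0. Then, with the limit taken over integers n > ℓ+1 tending to infinity, lim_{n→∞} n^{−m}·(d^m/dx^m)[F_{n,ℓ}(a;x) − F_{n,ℓ+1}(a;x)] evaluated at x = a equals (−1)^ℓ·(m choose ℓ), where the binomial coefficient (m choose ℓ) is 0 whenever ℓ > m, and the m-th derivative is that of the smooth function x ↦ F_{n,ℓ}(a;x) − F_{n,ℓ+1}(a;x) on ℝ. -/

import Mathlib

open Filter

/-- `f_{n,ℓ}(y;x)`: the density at `y` of the `ℓ`-th order statistic of `n` i.i.d.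
unit-rate exponential random variables conditioned to exceed `x`. -/
noncomputable def amsDensity (n ℓ : ℕ) (x y : ℝ) : ℝ :=
  (ℓ : ℝ) * (n.choose ℓ) * (1 - Real.exp (-(y - x))) ^ (ℓ - 1) *
    Real.exp (-((n : ℝ) - ℓ + 1) * (y - x))

/-- `F_{n,ℓ}(a;x)`, with the convention `F_{n,0}(a;x) = 1`. -/
noncomputable def amsCDF (n ℓ : ℕ) (a x : ℝ) : ℝ :=
  if ℓ = 0 then 1 else ∫ u in (0 : ℝ)..(a - x), amsDensity n ℓ 0 u

section Aux
open Finset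
open scoped fwdDiff

lemma real_choose_succ_right (n ℓ : ℕ) :
    ((ℓ:ℝ)+1) * (n.choose (ℓ+1) : ℝ) = (n.choose ℓ : ℝ) * ((n:ℝ) - ℓ) := by
  rcases le_or_gt (ℓ+1) n with h | h
  · have := Nat.choose_succ_right_eq n ℓ
    have hcast := congrArg (Nat.cast : ℕ → ℝ) this
    push_cast [Nat.cast_sub (by omega : ℓ ≤ n)] at hcast
    linarith
  · rcases Nat.lt_or_ge n ℓ with h2 | h2
    · rw [Nat.choose_eq_zero_of_lt (by omega), Nat.choose_eq_zero_of_lt (by omega)]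
      simp
    · have hn : n = ℓ := by omega
      subst hn
      rw [Nat.choose_eq_zero_of_lt (by omega), Nat.choose_self]
      simp


lemma fwdDiff_pow (j : ℕ) :
    Δ_[(1:ℝ)] (fun x : ℝ => x ^ j) = fun x => ∑ t ∈ range j, (j.choose t : ℝ) * x ^ t := by
  funext x
  simp only [fwdDiff]
  rw [add_pow]
  simp only [one_pow, mul_one]
  rw [Finset.sum_range_succ]
  simp [mul_comm]

lemma fwdDiff_iter_pow_of_lt : ∀ ℓ : ℕ, ∀ j < ℓ, (fwdDiff (1:ℝ))^[ℓ] (fun x : ℝ => x ^ j) = fun _ => 0 := by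
  intro ℓ
  induction ℓ with
  | zero => intro j hj; omega
  | succ ℓ ih =>
    intro j hj
    rw [Function.iterate_succ_apply, fwdDiff_pow]
    have : (fun x : ℝ => ∑ t ∈ range j, (j.choose t : ℝ) * x ^ t)
        = ∑ t ∈ range j, (fun x : ℝ => (j.choose t : ℝ) * x ^ t) := by
      funext x; simp
    rw [this]
    rw [fwdDiff_iter_finset_sum]
    funext x
    simp only [Finset.sum_apply, Pi.zero_apply]
    apply Finset.sum_eq_zero
    intro t ht
    have htl : t < ℓ := lt_of_lt_of_le (Finset.mem_range.mp ht) (by omega)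
    have h1 : (fun x : ℝ => (j.choose t : ℝ) * x ^ t)
        = (j.choose t : ℝ) • (fun x : ℝ => x ^ t) := by funext y; simp
    rw [h1, fwdDiff_iter_const_smul, ih t htl]
    simp

lemma fwdDiff_iter_pow_self : ∀ ℓ : ℕ, (fwdDiff (1:ℝ))^[ℓ] (fun x : ℝ => x ^ ℓ) = fun _ => (ℓ.factorial : ℝ) := by
  intro ℓ
  induction ℓ with
  | zero => funext x; simp
  | succ ℓ ih =>
    rw [Function.iterate_succ_apply, fwdDiff_pow]
    have : (fun x : ℝ => ∑ t ∈ range (ℓ+1), ((ℓ+1).choose t : ℝ) * x ^ t)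
        = ∑ t ∈ range (ℓ+1), ((ℓ+1).choose t : ℝ) • (fun x : ℝ => x ^ t) := by
      funext x; simp
    rw [this, fwdDiff_iter_finset_sum]
    funext x
    simp only [Finset.sum_apply]
    rw [Finset.sum_range_succ]
    have h0 : ∀ t ∈ range ℓ, ((fwdDiff (1:ℝ))^[ℓ] (((ℓ+1).choose t : ℝ) • (fun x : ℝ => x ^ t))) x = 0 := by
      intro t ht
      rw [fwdDiff_iter_const_smul, fwdDiff_iter_pow_of_lt ℓ t (Finset.mem_range.mp ht)]
      simp
    rw [Finset.sum_congr rfl (by intro t ht; exact h0 t ht)]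
    rw [fwdDiff_iter_const_smul, ih]
    simp [Nat.factorial_succ]

lemma altsum_eq (ℓ j : ℕ) (r : ℝ) :
    ∑ i ∈ range (ℓ+1), (ℓ.choose i : ℝ) * (-1)^i * (r + i)^j
      = (-1)^ℓ * (fwdDiff (1:ℝ))^[ℓ] (fun x : ℝ => x ^ j) r := by
  rw [fwdDiff_iter_eq_sum_shift]
  rw [Finset.mul_sum]
  apply Finset.sum_congr rfl
  intro k hk
  have hk' : k ≤ ℓ := Nat.lt_succ_iff.mp (Finset.mem_range.mp hk)
  have hsign : ((-1:ℝ))^ℓ * ((-1:ℝ))^(ℓ-k) = (-1:ℝ)^k := by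
    rw [← pow_add]
    have : ℓ + (ℓ - k) = 2*(ℓ-k) + k := by omega
    rw [this, pow_add, pow_mul]
    simp
  have : ((((-1:ℤ)) ^ (ℓ - k) * (ℓ.choose k : ℤ)) • ((r + k • (1:ℝ)) ^ j))
      = ((-1:ℝ))^(ℓ-k) * (ℓ.choose k : ℝ) * (r + k)^j := by
    push_cast [zsmul_eq_mul]
    ring_nf
  rw [this]
  rw [← mul_assoc, ← mul_assoc, hsign]
  ring

lemma factorial_mul_choose_eq_prod (ℓ : ℕ) : ∀ n : ℕ,
    (ℓ.factorial : ℝ) * (n.choose ℓ : ℝ) = ∏ i ∈ range ℓ, ((n:ℝ) - i) := by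
  induction ℓ with
  | zero => intro n; simp
  | succ ℓ ih =>
    intro n
    rw [Finset.prod_range_succ, ← ih n]
    have h := real_choose_succ_right n ℓ
    push_cast [Nat.factorial_succ]
    nlinarith [h]

lemma tendsto_choose_div_pow (ℓ : ℕ) :
    Tendsto (fun n : ℕ => (n.choose ℓ : ℝ) / (n:ℝ)^ℓ) atTop (nhds (1 / ℓ.factorial)) := by
  have h1 : Tendsto (fun n : ℕ => ∏ i ∈ range ℓ, (1 - (i:ℝ)/(n:ℝ))) atTop
      (nhds (∏ i ∈ range ℓ, (1:ℝ))) := by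
    apply tendsto_finset_prod
    intro i _
    have := tendsto_const_div_atTop_nhds_zero_nat (i:ℝ)
    simpa using (tendsto_const_nhds (x := (1:ℝ)) (f := atTop)).sub this
  rw [Finset.prod_const_one] at h1
  have h2 : Tendsto (fun n : ℕ => (1/ℓ.factorial : ℝ) * ∏ i ∈ range ℓ, (1 - (i:ℝ)/(n:ℝ)))
      atTop (nhds ((1/ℓ.factorial : ℝ) * 1)) := h1.const_mul _
  rw [mul_one] at h2
  apply h2.congr'
  filter_upwards [eventually_ge_atTop 1] with n hn
  have hn0 : (n:ℝ) ≠ 0 := by positivity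
  have key := factorial_mul_choose_eq_prod ℓ n
  have hprod : ∏ i ∈ range ℓ, (1 - (i:ℝ)/(n:ℝ)) = (∏ i ∈ range ℓ, ((n:ℝ) - i)) / (n:ℝ)^ℓ := by
    have : ∏ i ∈ range ℓ, (1 - (i:ℝ)/(n:ℝ)) = ∏ i ∈ range ℓ, (((n:ℝ) - i) / (n:ℝ)) := by
      apply Finset.prod_congr rfl
      intro i _
      field_simp
    rw [this, Finset.prod_div_distrib, Finset.prod_const, Finset.card_range]
  rw [hprod, ← key]
  have hfac : (ℓ.factorial : ℝ) ≠ 0 := by positivity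
  field_simp

lemma tendsto_choose_div_pow_of_lt (ℓ j : ℕ) (h : ℓ < j) :
    Tendsto (fun n : ℕ => (n.choose ℓ : ℝ) / (n:ℝ)^j) atTop (nhds 0) := by
  have h1 := tendsto_choose_div_pow ℓ
  have h2 : Tendsto (fun n : ℕ => (1:ℝ) / (n:ℝ)^(j-ℓ)) atTop (nhds 0) := by
    have hp : Tendsto (fun n : ℕ => (n:ℝ)^(j-ℓ)) atTop atTop :=
      (tendsto_pow_atTop (by omega : j - ℓ ≠ 0)).comp tendsto_natCast_atTop_atTop
    simpa [one_div, Pi.inv_def] using hp.inv_tendsto_atTop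
  have h3 := h1.mul h2
  rw [mul_zero] at h3
  apply h3.congr'
  filter_upwards [eventually_ge_atTop 1] with n hn
  have hn0 : (n:ℝ) ≠ 0 := by positivity
  rw [div_mul_div_comm, mul_one, ← pow_add]
  congr 2
  omega


lemma deriv_sum_exp {ι : Type} (s : Finset ι) (A c : ι → ℝ) :
    deriv (fun x => ∑ i ∈ s, A i * Real.exp (c i * x))
      = fun x => ∑ i ∈ s, (A i * c i) * Real.exp (c i * x) := by
  funext x
  have h : HasDerivAt (fun x => ∑ i ∈ s, A i * Real.exp (c i * x))
      (∑ i ∈ s, (A i * c i) * Real.exp (c i * x)) x := by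
    apply HasDerivAt.fun_sum
    intro i _
    have h1 : HasDerivAt (fun x : ℝ => c i * x) (c i) x := by
      simpa using (hasDerivAt_id x).const_mul (c i)
    have h2 := (h1.exp).const_mul (A i)
    exact h2.congr_deriv (by ring)
  exact h.deriv

lemma iteratedDeriv_sum_exp {ι : Type} (m : ℕ) (s : Finset ι) (A c : ι → ℝ) :
    iteratedDeriv m (fun x => ∑ i ∈ s, A i * Real.exp (c i * x))
      = fun x => ∑ i ∈ s, A i * (c i)^m * Real.exp (c i * x) := by
  induction m generalizing A with
  | zero => simp
  | succ m ih =>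
    rw [iteratedDeriv_succ', deriv_sum_exp, ih (fun i => A i * c i)]
    funext x
    apply Finset.sum_congr rfl
    intro i _
    ring

noncomputable def amsS (ℓ j : ℕ) : ℝ :=
  ∑ i ∈ range (ℓ+1), (ℓ.choose i : ℝ) * (-1)^i * ((-(ℓ:ℝ)) + i)^j

lemma amsS_of_lt (ℓ j : ℕ) (h : j < ℓ) : amsS ℓ j = 0 := by
  rw [amsS, altsum_eq, fwdDiff_iter_pow_of_lt ℓ j h]
  simp

lemma amsS_self (ℓ : ℕ) : amsS ℓ ℓ = (-1:ℝ)^ℓ * ℓ.factorial := by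
  rw [amsS, altsum_eq, fwdDiff_iter_pow_self ℓ]

lemma continuous_amsDensity (n ℓ : ℕ) : Continuous (fun u => amsDensity n ℓ 0 u) := by
  unfold amsDensity
  fun_prop

noncomputable def amsPsi (n ℓ : ℕ) (b : ℝ) : ℝ :=
  (n.choose ℓ : ℝ) * (1 - Real.exp (-b))^ℓ * Real.exp (-((n:ℝ)-ℓ)*b)

lemma hasDerivAt_amsPsi (n ℓ : ℕ) (b : ℝ) :
    HasDerivAt (amsPsi n ℓ) (amsDensity n ℓ 0 b - amsDensity n (ℓ+1) 0 b) b := by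
  have h1 : HasDerivAt (fun b : ℝ => -b) (-1) b := (hasDerivAt_id b).neg
  have h2 := h1.exp
  have h3 : HasDerivAt (fun b : ℝ => 1 - Real.exp (-b)) (Real.exp (-b)) b := by
    simpa using h2.const_sub 1
  have h4 := h3.fun_pow ℓ
  have h5 : HasDerivAt (fun b : ℝ => Real.exp (-((n:ℝ)-ℓ)*b))
      (Real.exp (-((n:ℝ)-ℓ)*b) * (-((n:ℝ)-ℓ))) b := by
    simpa using ((hasDerivAt_id b).const_mul (-((n:ℝ)-ℓ))).exp
  have h6 := ((h4.fun_mul h5).const_mul ((n.choose ℓ : ℝ)))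
  have heq : amsPsi n ℓ = fun b => (n.choose ℓ : ℝ) *
      ((1 - Real.exp (-b))^ℓ * Real.exp (-((n:ℝ)-ℓ)*b)) := by
    funext y; simp [amsPsi, mul_assoc]
  rw [heq]
  refine h6.congr_deriv ?_
  symm
  have hEF : Real.exp (-((n:ℝ)-(ℓ:ℝ)+1)*b) = Real.exp (-b) * Real.exp (-((n:ℝ)-ℓ)*b) := by
    rw [← Real.exp_add]; ring_nf
  have hch := real_choose_succ_right n ℓ
  simp only [amsDensity, sub_zero]
  push_cast
  have hexp2 : (-((n:ℝ) - (↑ℓ + 1) + 1)*b) = (-((n:ℝ)-ℓ)*b) := by ring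
  rw [hexp2, hEF]
  linear_combination (-(1 - Real.exp (-b))^ℓ * Real.exp (-((n:ℝ)-(ℓ:ℝ))*b)) * hch

lemma amsCDF_diff_eq (n ℓ : ℕ) (a x : ℝ) :
    amsCDF n ℓ a x - amsCDF n (ℓ+1) a x
      = (n.choose ℓ : ℝ) * (1 - Real.exp (-(a-x)))^ℓ * Real.exp (-((n:ℝ)-ℓ)*(a-x)) := by
  have hint : ∀ k : ℕ, IntervalIntegrable (fun u => amsDensity n k 0 u)
      MeasureTheory.volume 0 (a-x) := fun k => (continuous_amsDensity n k).intervalIntegrable _ _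
  have key : ∫ u in (0:ℝ)..(a-x), (amsDensity n ℓ 0 u - amsDensity n (ℓ+1) 0 u)
      = amsPsi n ℓ (a-x) - amsPsi n ℓ 0 := by
    apply intervalIntegral.integral_eq_sub_of_hasDerivAt
    · intro t _
      exact hasDerivAt_amsPsi n ℓ t
    · exact (hint ℓ).sub (hint (ℓ+1))
  rw [intervalIntegral.integral_sub (hint ℓ) (hint (ℓ+1))] at key
  rcases Nat.eq_zero_or_pos ℓ with h0 | hpos
  · subst h0
    have hzero : (∫ u in (0:ℝ)..(a-x), amsDensity n 0 0 u) = 0 := by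
      have : (fun u => amsDensity n 0 0 u) = fun _ => (0:ℝ) := by
        funext u; simp [amsDensity]
      rw [this]; simp
    rw [hzero, zero_sub] at key
    have hpsi0 : amsPsi n 0 0 = 1 := by simp [amsPsi]
    rw [hpsi0] at key
    have hC0 : amsCDF n 0 a x = 1 := by simp [amsCDF]
    have hC1 : amsCDF n (0+1) a x = ∫ u in (0:ℝ)..(a-x), amsDensity n (0+1) 0 u := by
      simp [amsCDF]
    have hR : (n.choose 0 : ℝ) * (1 - Real.exp (-(a-x)))^(0:ℕ)
        * Real.exp (-((n:ℝ)-((0:ℕ):ℝ))*(a-x)) = amsPsi n 0 (a-x) := by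
      simp [amsPsi]
    rw [hC0, hC1, hR]
    linarith [key]
  · obtain ⟨k, rfl⟩ : ∃ k, ℓ = k + 1 := ⟨ℓ - 1, by omega⟩
    have hC1 : amsCDF n (k+1) a x = ∫ u in (0:ℝ)..(a-x), amsDensity n (k+1) 0 u := by
      simp [amsCDF]
    have hC2 : amsCDF n (k+1+1) a x = ∫ u in (0:ℝ)..(a-x), amsDensity n (k+1+1) 0 u := by
      simp [amsCDF]
    have hpsi0 : amsPsi n (k+1) 0 = 0 := by simp [amsPsi]
    rw [hpsi0, sub_zero] at key
    rw [hC1, hC2, key]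
    simp [amsPsi]

end Aux

section Aux2
open Finset

-- Step A: the exact value of the iterated derivative
lemma iter_value (n ℓ m : ℕ) (a : ℝ) :
    iteratedDeriv m (fun x => amsCDF n ℓ a x - amsCDF n (ℓ+1) a x) a
      = (n.choose ℓ : ℝ) *
          ∑ i ∈ range (ℓ+1), (ℓ.choose i : ℝ) * (-1)^i * ((n:ℝ) - ℓ + i)^m := by
  set c : ℕ → ℝ := fun i => (n:ℝ) - ℓ + i with hc
  set A : ℕ → ℝ := fun i =>
    (n.choose ℓ : ℝ) * (ℓ.choose i : ℝ) * (-1)^i * Real.exp (-(c i) * a) with hA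
  have hfun : (fun x => amsCDF n ℓ a x - amsCDF n (ℓ+1) a x)
      = fun x => ∑ i ∈ range (ℓ+1), A i * Real.exp (c i * x) := by
    funext x
    rw [amsCDF_diff_eq]
    have hbin : (1 - Real.exp (-(a-x)))^ℓ
        = ∑ i ∈ range (ℓ+1), (ℓ.choose i : ℝ) * (-1)^i * Real.exp (-(a-x))^i := by
      have hap := add_pow (-Real.exp (-(a-x))) 1 ℓ
      rw [show (1 : ℝ) - Real.exp (-(a-x)) = -Real.exp (-(a-x)) + 1 by ring, hap]
      apply Finset.sum_congr rfl
      intro i _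
      ring
    rw [hbin, Finset.mul_sum, Finset.sum_mul]
    apply Finset.sum_congr rfl
    intro i hi
    have hexp : Real.exp (-(a-x))^i = Real.exp (-(i:ℝ)*(a-x)) := by
      rw [← Real.exp_nat_mul]; ring_nf
    rw [hexp]
    have hcomb : Real.exp (-(i:ℝ)*(a-x)) * Real.exp (-((n:ℝ)-ℓ)*(a-x))
        = Real.exp (-(c i) * a) * Real.exp (c i * x) := by
      rw [← Real.exp_add, ← Real.exp_add]
      congr 1
      simp only [hc]
      ring
    simp only [hA]
    calc (n.choose ℓ : ℝ) * ((ℓ.choose i : ℝ) * (-1)^i * Real.exp (-(i:ℝ)*(a-x)))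
          * Real.exp (-((n:ℝ)-ℓ)*(a-x))
        = (n.choose ℓ : ℝ) * (ℓ.choose i : ℝ) * (-1)^i *
            (Real.exp (-(i:ℝ)*(a-x)) * Real.exp (-((n:ℝ)-ℓ)*(a-x))) := by ring
      _ = (n.choose ℓ : ℝ) * (ℓ.choose i : ℝ) * (-1)^i *
            (Real.exp (-(c i) * a) * Real.exp (c i * x)) := by rw [hcomb]
      _ = _ := by ring
  rw [hfun, iteratedDeriv_sum_exp]
  rw [Finset.mul_sum]
  apply Finset.sum_congr rfl
  intro i _
  have : Real.exp (-(c i) * a) * Real.exp (c i * a) = 1 := by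
    rw [← Real.exp_add, show -(c i) * a + c i * a = 0 by ring, Real.exp_zero]
  simp only [hA]
  calc (n.choose ℓ:ℝ) * (ℓ.choose i:ℝ) * (-1)^i * Real.exp (-(c i)*a) * (c i)^m
        * Real.exp (c i * a)
      = (n.choose ℓ:ℝ) * ((ℓ.choose i:ℝ) * (-1)^i * (c i)^m)
          * (Real.exp (-(c i)*a) * Real.exp (c i * a)) := by ring
    _ = _ := by rw [this]; ring

/-- `n^{−m}·(d^m/dx^m)[F_{n,ℓ}(a;x) − F_{n,ℓ+1}(a;x)]|_{x=a} → (−1)^ℓ·(m choose ℓ)`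
as `n → ∞` (where `(m choose ℓ) = 0` if `ℓ > m`). -/
theorem tendsto_deriv_amsCDF_diff (a : ℝ) (ha : 0 < a) (m ℓ : ℕ) :
    Tendsto (fun n : ℕ =>
      (1 / (n : ℝ) ^ m) *
        iteratedDeriv m (fun x => amsCDF n ℓ a x - amsCDF n (ℓ + 1) a x) a)
      atTop (nhds ((-1 : ℝ) ^ ℓ * (m.choose ℓ : ℝ))) := by
  set L : ℕ → ℝ := fun k => if m - k = ℓ ∧ k ≤ m then (-1:ℝ)^ℓ * (m.choose k : ℝ) else 0 with hL
  have hLsum : ∑ k ∈ range (m+1), L k = (-1:ℝ)^ℓ * (m.choose ℓ : ℝ) := by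
    rcases le_or_gt ℓ m with hlm | hlm
    · rw [Finset.sum_eq_single_of_mem (m - ℓ) (Finset.mem_range.mpr (by omega))]
      · have hcond : m - (m - ℓ) = ℓ ∧ m - ℓ ≤ m := by omega
        simp only [hL, if_pos hcond]
        rw [Nat.choose_symm hlm]
      · intro k hk hne
        simp only [hL]
        rw [if_neg]
        rintro ⟨h1, h2⟩
        omega
    · rw [Finset.sum_eq_zero, Nat.choose_eq_zero_of_lt hlm]
      · simp
      · intro k hk
        simp only [hL]
        rw [if_neg]
        rintro ⟨h1, h2⟩
        omega
  rw [← hLsum]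
  set term : ℕ → ℕ → ℝ := fun k n =>
    (m.choose k : ℝ) * amsS ℓ (m-k) * ((n.choose ℓ : ℝ) / (n:ℝ)^(m-k)) with hterm
  have hterms : ∀ k ∈ range (m+1), Tendsto (fun n => term k n) atTop (nhds (L k)) := by
    intro k hk
    have hkm : k ≤ m := Nat.lt_succ_iff.mp (Finset.mem_range.mp hk)
    rcases lt_trichotomy (m - k) ℓ with h | h | h
    · have : ∀ n : ℕ, term k n = 0 := by
        intro n; simp [hterm, amsS_of_lt ℓ (m-k) h]
      simp only [hL, if_neg (by omega : ¬(m - k = ℓ ∧ k ≤ m))]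
      simp only [this]
      exact tendsto_const_nhds
    · have hcond : m - k = ℓ ∧ k ≤ m := ⟨h, hkm⟩
      simp only [hL, if_pos hcond]
      have h1 := (tendsto_choose_div_pow ℓ).const_mul ((m.choose k : ℝ) * amsS ℓ (m-k))
      have heq : (m.choose k : ℝ) * amsS ℓ (m-k) * (1 / (ℓ.factorial : ℝ))
          = (-1:ℝ)^ℓ * (m.choose k : ℝ) := by
        rw [h, amsS_self]
        have : (ℓ.factorial : ℝ) ≠ 0 := by positivity
        field_simp
      rw [heq] at h1
      apply h1.congr
      intro n
      simp only [hterm, h]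
    · have h1 := (tendsto_choose_div_pow_of_lt ℓ (m-k) h).const_mul
        ((m.choose k : ℝ) * amsS ℓ (m-k))
      rw [mul_zero] at h1
      simp only [hL, if_neg (by omega : ¬(m - k = ℓ ∧ k ≤ m))]
      apply h1.congr
      intro n
      simp only [hterm]
  have hsum := tendsto_finset_sum (range (m+1)) hterms
  apply hsum.congr'
  filter_upwards [eventually_ge_atTop 1] with n hn
  have hn0 : (n:ℝ) ≠ 0 := by positivity
  rw [iter_value]
  have hbin : ∀ i : ℕ, ((n:ℝ) - ℓ + i)^m
      = ∑ k ∈ range (m+1), (n:ℝ)^k * ((-(ℓ:ℝ)) + i)^(m-k) * (m.choose k : ℝ) := by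
    intro i
    rw [show ((n:ℝ) - ℓ + i) = (n:ℝ) + ((-(ℓ:ℝ)) + i) by ring, add_pow]
  have step1 : ∑ i ∈ range (ℓ+1), (ℓ.choose i : ℝ) * (-1)^i * ((n:ℝ) - ℓ + i)^m
      = ∑ k ∈ range (m+1), (n:ℝ)^k * (m.choose k : ℝ) * amsS ℓ (m-k) := by
    calc ∑ i ∈ range (ℓ+1), (ℓ.choose i : ℝ) * (-1)^i * ((n:ℝ) - ℓ + i)^m
        = ∑ i ∈ range (ℓ+1), ∑ k ∈ range (m+1),
            (ℓ.choose i : ℝ) * (-1)^i * ((n:ℝ)^k * ((-(ℓ:ℝ)) + i)^(m-k) * (m.choose k : ℝ)) := by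
          apply Finset.sum_congr rfl
          intro i _
          rw [hbin i, Finset.mul_sum]
      _ = ∑ k ∈ range (m+1), ∑ i ∈ range (ℓ+1),
            (ℓ.choose i : ℝ) * (-1)^i * ((n:ℝ)^k * ((-(ℓ:ℝ)) + i)^(m-k) * (m.choose k : ℝ)) :=
          Finset.sum_comm
      _ = ∑ k ∈ range (m+1), (n:ℝ)^k * (m.choose k : ℝ) * amsS ℓ (m-k) := by
          apply Finset.sum_congr rfl
          intro k _
          rw [amsS, Finset.mul_sum]
          apply Finset.sum_congr rfl
          intro i _
          ring
  rw [step1, Finset.mul_sum, Finset.mul_sum]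
  apply Finset.sum_congr rfl
  intro k hk
  have hkm : k ≤ m := Nat.lt_succ_iff.mp (Finset.mem_range.mp hk)
  simp only [hterm]
  have hpow : (n:ℝ)^(m-k) * (n:ℝ)^k = (n:ℝ)^m := by
    rw [← pow_add]; congr 1; omega
  field_simp
  rw [← hpow]
  ring

end Aux2
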